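/- arXiv:1405.4892 — 4 statements merged into one kernel-verified Lean document; each statement's English description precedes it below -/
import Mathlib

section
/- Let w be a nonempty word over Σ and let w₁ be the longest prefix of w that is a Lyndon word, so that w = w₁w'. Then the Lyndon factorization of w is w₁ followed by the Lyndon factorization of w', i.e., CFL(w) = w₁ CFL(w'). -/
variable {α : Type*}

/-- The rotation `rot(w,i) = w[i..|w|-1] w[0..i-1]`. -/
def rot (w : List α) (i : ℕ) : List α := w.drop i ++ w.take i

/-- A Lyndon word: a nonempty word strictly smaller than all of its proper rotations. -/
def IsLyndon [LinearOrder α] (w : List α) : Prop :=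
  w ≠ [] ∧ ∀ i, 0 < i → i < w.length → w < rot w i

/-- `IsCFL w f` : `f` is the Chen–Fox–Lyndon factorization of `w`, i.e. a
nonincreasing sequence of Lyndon words whose concatenation is `w`. -/
def IsCFL [LinearOrder α] (w : List α) (f : List (List α)) : Prop :=
  f.flatten = w ∧ (∀ x ∈ f, IsLyndon x) ∧ f.Chain' (· ≥ ·)

/-- `u^k` : the `k`-fold concatenation of the word `u`. -/
def listPow (u : List α) (k : ℕ) : List α := (List.replicate k u).flatten

/-- `P`: the set of nonempty prefixes of Lyndon words. -/
def InP [LinearOrder α] (w : List α) : Prop :=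
  w ≠ [] ∧ ∃ u : List α, IsLyndon (w ++ u)

/-- `P' = P ∪ { c^k : k ≥ 2 }` where `c` is the maximum symbol of the alphabet. -/
def InP' [LinearOrder α] (w : List α) : Prop :=
  InP w ∨ ∃ (c : α) (k : ℕ), 2 ≤ k ∧ (∀ a : α, a ≤ c) ∧ w = List.replicate k c

/-- A border of `w`: a proper prefix of `w` that is also a suffix of `w`. -/
def IsBorder (b w : List α) : Prop := b <+: w ∧ b <:+ w ∧ b.length < w.length

/-- The length of the longest common prefix of two words. -/
def lcpLen [DecidableEq α] : List α → List α → ℕ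
  | a :: u, b :: v => if a = b then lcpLen u v + 1 else 0
  | _, _ => 0

section Aux

variable [LinearOrder α]

lemma list_lt_iff_lex {u v : List α} : u < v ↔ List.Lex (· < ·) u v := Iff.rfl

/-- If `u < v`, then either `u` is a prefix of `v` or any extensions satisfy
`u ++ x < v ++ y`. -/
lemma lt_append_of_lt {u v : List α} (x y : List α) (h : u < v) :
    u <+: v ∨ u ++ x < v ++ y := by
  have h' : List.Lex (· < ·) u v := h
  clear h
  induction h' with
  | nil => exact Or.inl (List.nil_prefix)
  | @cons a u v _ ih =>
    rcases ih with hp | hlt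
    · exact Or.inl (by obtain ⟨t, rfl⟩ := hp; exact ⟨t, rfl⟩)
    · exact Or.inr (list_lt_iff_lex.mpr (List.Lex.cons hlt))
  | @rel a u b v hab =>
    exact Or.inr (list_lt_iff_lex.mpr (List.Lex.rel hab))

lemma append_lt_append_left_iff (u : List α) {x y : List α} :
    u ++ x < u ++ y ↔ x < y := by
  induction u with
  | nil => exact Iff.rfl
  | cons a u ih =>
    constructor
    · intro h
      have h' : List.Lex (· < ·) (a :: (u ++ x)) (a :: (u ++ y)) := h
      cases h' with
      | cons h'' => exact ih.mp h''
      | rel h'' => exact absurd h'' (lt_irrefl a)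
    · intro h
      exact list_lt_iff_lex.mpr (List.Lex.cons (list_lt_iff_lex.mp (ih.mpr h)))

/-- A Lyndon word is smaller than all of its proper suffixes. -/
lemma lyndon_lt_drop {w : List α} (h : IsLyndon w) {i : ℕ} (h0 : 0 < i)
    (hi : i < w.length) : w < w.drop i := by
  by_contra hns
  have hrot : w < w.drop i ++ w.take i := h.2 i h0 hi
  rcases lt_trichotomy (w.drop i) w with hlt | heq | hgt
  · rcases lt_append_of_lt (w.take i) ([] : List α) hlt with hp | hlt2
    · -- `w.drop i` is a prefix of `w`; write `w = s ++ t`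
      obtain ⟨t, hts⟩ := hp
      set s := w.drop i with hs
      have hslen : s.length = w.length - i := by simp [hs]
      have htlen : t.length = i := by
        have := congrArg List.length hts
        simp [List.length_append, hslen] at this
        omega
      have hs0 : 0 < s.length := by omega
      have hsw : s.length < w.length := by omega
      have hrot2 : w < w.drop s.length ++ w.take s.length := h.2 s.length hs0 hsw
      rw [← hts, List.drop_left, List.take_left] at hrot2
      -- hrot2 : w < t ++ s
      have htp : t < w.take i := by
        have h3 : s ++ t < s ++ w.take i := by rw [hts]; exact hrot
        exact (append_lt_append_left_iff s).mp h3
      have hnp : ¬ t <+: w.take i := by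
        intro hp2
        have hlen2 : t.length = (w.take i).length := by
          simp [List.length_take]; omega
        have := hp2.eq_of_length hlen2
        rw [this] at htp
        exact lt_irrefl _ htp
      rcases lt_append_of_lt s s htp with hp2 | hlt3
      · exact hnp hp2
      · rw [List.take_append_drop] at hlt3
        -- hlt3 : t ++ s < w, hrot2 : s ++ t < t ++ s
        rw [hts] at hrot2
        exact lt_irrefl _ (lt_trans hrot2 hlt3)
    · rw [List.append_nil] at hlt2
      exact lt_irrefl _ (lt_trans hrot hlt2)
  · have := congrArg List.length heq
    simp [List.length_drop] at this
    omega
  · exact hns hgt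

/-- Conversely, a nonempty word smaller than all its proper suffixes is Lyndon. -/
lemma lyndon_of_lt_drop {w : List α} (hne : w ≠ [])
    (h : ∀ i, 0 < i → i < w.length → w < w.drop i) : IsLyndon w := by
  refine ⟨hne, fun i h0 hi => ?_⟩
  have hws := h i h0 hi
  rcases lt_append_of_lt ([] : List α) (w.take i) hws with hp | hlt
  · have := hp.length_le
    simp [List.length_drop] at this
    omega
  · rw [List.append_nil] at hlt
    exact hlt

/-- If `u` and `v` are Lyndon words with `u < v`, then `u ++ v < v`. -/
lemma append_lt_right {u v : List α} (hu : IsLyndon u) (hv : IsLyndon v)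
    (huv : u < v) : u ++ v < v := by
  rcases lt_append_of_lt v ([] : List α) huv with hp | hlt
  · obtain ⟨t, rfl⟩ := hp
    have ht : t ≠ [] := by
      rintro rfl
      rw [List.append_nil] at huv
      exact lt_irrefl _ huv
    have hu0 : 0 < u.length := List.length_pos_iff.mpr hu.1
    have hulen : u.length < (u ++ t).length := by
      simp [List.length_append]
      exact List.length_pos_iff.mpr ht
    have hvt : u ++ t < (u ++ t).drop u.length := lyndon_lt_drop hv hu0 hulen
    rw [List.drop_left] at hvt
    exact (append_lt_append_left_iff u).mpr hvt
  · rw [List.append_nil] at hlt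
    exact hlt

/-- Concatenation of Lyndon words `u < v` is Lyndon. -/
lemma lyndon_append {u v : List α} (hu : IsLyndon u) (hv : IsLyndon v)
    (huv : u < v) : IsLyndon (u ++ v) := by
  have huvv : u ++ v < v := append_lt_right hu hv huv
  apply lyndon_of_lt_drop
  · simp [hu.1]
  · intro i h0 hi
    rw [List.length_append] at hi
    rcases lt_trichotomy i u.length with hlt | heq | hgt
    · have hus : u < u.drop i := lyndon_lt_drop hu h0 hlt
      rcases lt_append_of_lt v v hus with hp | hlt2
      · have := hp.length_le
        simp [List.length_drop] at this
        omega
      · rw [List.drop_append_of_le_length hlt.le]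
        exact hlt2
    · subst heq
      rw [List.drop_left]
      exact huvv
    · have hj0 : 0 < i - u.length := by omega
      have hjv : i - u.length < v.length := by omega
      have hdrop : (u ++ v).drop i = v.drop (i - u.length) := by
        rw [List.drop_append]
        have : u.drop i = [] := List.drop_eq_nil_of_le (by omega)
        simp [this]
      rw [hdrop]
      exact lt_trans huvv (lyndon_lt_drop hv hj0 hjv)

end Aux

/-- If `w₁` is the longest Lyndon prefix of `w = w₁ w'`, then
`CFL(w) = w₁ CFL(w')`. -/
theorem cfl_longest_lyndon_prefix [LinearOrder α] (w w₁ w' : List α) (hw : w ≠ [])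
    (hsplit : w = w₁ ++ w') (h1 : IsLyndon w₁)
    (hlongest : ∀ p : List α, p <+: w → IsLyndon p → p.length ≤ w₁.length)
    (f : List (List α)) (hf : IsCFL w' f) :
    IsCFL w (w₁ :: f) := by
  obtain ⟨hflat, hlyn, hchain⟩ := hf
  refine ⟨by simp [hflat, hsplit], ?_, ?_⟩
  · intro x hx
    rcases List.mem_cons.mp hx with rfl | hx
    · exact h1
    · exact hlyn x hx
  · cases f with
    | nil => exact List.isChain_singleton _
    | cons g rest =>
      simp only [List.Chain', List.isChain_cons_cons]
      refine ⟨?_, hchain⟩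
      by_contra hlt
      push_neg at hlt
      have hg : IsLyndon g := hlyn g List.mem_cons_self
      have hL : IsLyndon (w₁ ++ g) := lyndon_append h1 hg hlt
      have hpre : w₁ ++ g <+: w := by
        refine ⟨rest.flatten, ?_⟩
        rw [hsplit, ← hflat]
        simp [List.append_assoc]
      have := hlongest (w₁ ++ g) hpre hL
      rw [List.length_append] at this
      have : g.length = 0 := by omega
      exact hg.1 (List.eq_nil_of_length_eq_zero this)
end

section
/- Let w = (uav')^k u, where u, v' ∈ Σ*, a ∈ Σ, k ≥ 1 and uav' is a Lyndon word. Then wa ∈ P' \ L, i.e., wa belongs to P' but is not a Lyndon word. -/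
variable {α : Type*}

section Aux
variable [LinearOrder α]

lemma myL : ∀ (u v : List α), u < v → ¬ u <+: v → ∀ p q, u ++ p < v ++ q := by
  intro u
  induction u with
  | nil => intro v h hp p q; exact absurd List.nil_prefix hp
  | cons a u ih =>
    intro v h hp p q
    cases v with
    | nil => exact absurd (h : List.Lex (· < ·) (a :: u) []) List.not_lex_nil
    | cons b v =>
      have h' : List.Lex (· < ·) (a :: u) (b :: v) := h
      cases h' with
      | rel hr => exact List.Lex.rel hr
      | cons ht =>
        have hnp : ¬ u <+: v := fun hpre => hp (List.cons_prefix_cons.mpr ⟨rfl, hpre⟩)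
        exact List.Lex.cons (ih v ht hnp p q)

lemma lt_append_left_iff : ∀ (b x y : List α), b ++ x < b ++ y ↔ x < y
  | [], _, _ => Iff.rfl
  | c :: b, x, y => by
    show List.Lex (· < ·) (c :: (b ++ x)) (c :: (b ++ y)) ↔ _
    rw [List.cons_lex_cons_iff]; simp only [lt_irrefl, false_or, true_and]
    exact lt_append_left_iff b x y

lemma lt_of_append_right : ∀ (x y z : List α), x.length = y.length →
    x ++ z < y ++ z → x < y ∨ x = y := by
  intro x
  induction x with
  | nil =>
    intro y z hlen _
    cases y with
    | nil => exact .inr rfl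
    | cons b y => simp at hlen
  | cons a x ih =>
    intro y z hlen h
    cases y with
    | nil => simp at hlen
    | cons b y =>
      have hlen' : x.length = y.length := by simpa using hlen
      have h' : List.Lex (· < ·) (a :: (x ++ z)) (b :: (y ++ z)) := h
      cases h' with
      | rel hr => exact .inl (List.Lex.rel hr)
      | cons ht =>
        rcases ih y z hlen' ht with h1 | h1
        · exact .inl (List.Lex.cons h1)
        · exact .inr (by rw [h1])

lemma lt_of_prefix_ne : ∀ (u v : List α), u <+: v → u ≠ v → u < v
  | [], [], _, h => absurd rfl h
  | [], b :: v, _, _ => List.nil_lt_cons b v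
  | a :: u, v, hp, h => by
    cases v with
    | nil => exact absurd hp.length_le (by simp)
    | cons b v =>
      obtain ⟨rfl, hp'⟩ := List.cons_prefix_cons.mp hp
      exact List.Lex.cons (lt_of_prefix_ne u v hp' (fun he => h (by rw [he])))

lemma not_prefix_of_length_lt {u v : List α} (h : v.length < u.length) : ¬ u <+: v :=
  fun hp => absurd hp.length_le (by omega)

lemma border_not_lyndon {b w : List α} (hbne : b ≠ []) (hb : IsBorder b w) :
    ¬ IsLyndon w := by
  obtain ⟨⟨s, hs⟩, ⟨t, ht⟩, hlen⟩ := hb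
  intro hw
  have hbl : 0 < b.length := List.length_pos_iff.mpr hbne
  have hwt : w.length = t.length + b.length := by rw [← ht]; simp
  have hws : w.length = b.length + s.length := by rw [← hs]; simp
  have h1 : w < b ++ t := by
    have h := hw.2 t.length (by omega) (by omega)
    unfold rot at h
    rw [← ht, List.drop_left, List.take_left] at h
    rw [← ht]; exact h
  have h2 : w < s ++ b := by
    have h := hw.2 b.length hbl (by omega)
    unfold rot at h
    rw [← hs, List.drop_left, List.take_left] at h
    rw [← hs]; exact h
  rw [← hs] at h1
  have hst : s < t := (lt_append_left_iff b s t).mp h1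
  rw [← ht] at h2
  rcases lt_of_append_right t s b (by omega) h2 with h3 | h3
  · exact absurd hst (asymm h3)
  · rw [h3] at hst; exact lt_irrefl _ hst

lemma lyndon_lt_drop_s7 {l : List α} (hl : IsLyndon l) {i : ℕ} (hi : 0 < i)
    (hil : i < l.length) : l < l.drop i := by
  have hlen : (l.drop i).length = l.length - i := List.length_drop
  have hne : l.drop i ≠ [] := by
    intro h; rw [h] at hlen; simp at hlen; omega
  rcases lt_trichotomy l (l.drop i) with h | h | h
  · exact h
  · exact absurd (congrArg List.length h) (by omega)
  · by_cases hp : l.drop i <+: l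
    · exact absurd hl (border_not_lyndon hne ⟨hp, List.drop_suffix i l, by omega⟩)
    · have h2 := myL _ _ h hp (l.take i) []
      rw [List.append_nil] at h2
      have h3 := hl.2 i hi hil
      unfold rot at h3
      exact absurd h3 (asymm h2)

lemma lyndon_append_s7 {x y : List α} (hx : IsLyndon x) (hy : IsLyndon y) (hxy : x < y) :
    IsLyndon (x ++ y) := by
  refine ⟨by simp [hx.1], ?_⟩
  intro i hi hlen
  rw [List.length_append] at hlen
  unfold rot
  rcases lt_trichotomy i x.length with hix | hix | hix
  · rw [List.drop_append_of_le_length hix.le, List.take_append_of_le_length hix.le,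
      List.append_assoc]
    exact myL _ _ (lyndon_lt_drop_s7 hx hi hix)
      (not_prefix_of_length_lt (by rw [List.length_drop]; omega)) _ _
  · subst hix
    rw [List.drop_left, List.take_left]
    by_cases hp : x <+: y
    · have hxney : x ≠ y := fun h => absurd hxy (by rw [h]; exact lt_irrefl y)
      obtain ⟨r, hr⟩ := hp
      have hrne : r ≠ [] := by rintro rfl; rw [List.append_nil] at hr; exact hxney hr
      have hxly : x.length < y.length := by
        have := congrArg List.length hr
        simp at this
        have : r.length ≠ 0 := fun h => hrne (List.length_eq_zero_iff.mp h)
        omega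
      have hdr : y.drop x.length = r := by rw [← hr, List.drop_left]
      have h1 : y < r := hdr ▸ lyndon_lt_drop_s7 hy (List.length_pos_iff.mpr hx.1) hxly
      have h2 := myL y r h1 (not_prefix_of_length_lt (by
        have := congrArg List.length hdr
        rw [List.length_drop] at this
        omega)) [] x
      rw [List.append_nil] at h2
      have h3 : x ++ y < x ++ (r ++ x) := (lt_append_left_iff x y (r ++ x)).mpr h2
      rw [← List.append_assoc, hr] at h3
      exact h3
    · exact myL x y hxy hp y x
  · have hij : i = x.length + (i - x.length) := by omega
    have hj0 : 0 < i - x.length := by omega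
    have hjlen : i - x.length < y.length := by omega
    rw [hij, List.drop_length_add_append, List.take_length_add_append]
    have hys : y < y.drop (i - x.length) := lyndon_lt_drop_s7 hy hj0 hjlen
    have hdlen : (y.drop (i - x.length)).length = y.length - (i - x.length) :=
      List.length_drop
    by_cases hp : x <+: y.drop (i - x.length)
    · obtain ⟨r, hr⟩ := hp
      have hrne : r ≠ [] := by
        rintro rfl
        rw [List.append_nil] at hr
        exact absurd (hr ▸ hys) (asymm hxy)
      have hrlen : 0 < r.length := List.length_pos_iff.mpr hrne
      have hxr : x.length + r.length = y.length - (i - x.length) := by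
        rw [← hdlen, ← hr]; simp
      have hdr2 : y.drop ((i - x.length) + x.length) = r := by
        rw [← List.drop_drop, ← hr, List.drop_left]
      have h1 : y < r := hdr2 ▸ lyndon_lt_drop_s7 hy (by omega) (by omega)
      have h2 := myL y r h1 (not_prefix_of_length_lt (by omega)) []
        (x ++ List.take (i - x.length) y)
      rw [List.append_nil] at h2
      have h3 : x ++ y < x ++ (r ++ (x ++ List.take (i - x.length) y)) :=
        (lt_append_left_iff _ _ _).mpr h2
      rw [← List.append_assoc, hr] at h3
      exact h3
    · exact myL x _ (lt_trans hxy hys) hp y _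

lemma lyndon_append_singleton {c : α} {t : List α} (hl : IsLyndon (c :: t)) {M : α}
    (hM : c < M) : IsLyndon ((c :: t) ++ [M]) := by
  refine ⟨by simp, ?_⟩
  intro i hi hlen
  rw [List.length_append, List.length_singleton] at hlen
  unfold rot
  rcases lt_or_eq_of_le (Nat.lt_succ_iff.mp hlen) with hix | hix
  · rw [List.drop_append_of_le_length hix.le, List.take_append_of_le_length hix.le,
      List.append_assoc]
    exact myL _ _ (lyndon_lt_drop_s7 hl hi hix)
      (not_prefix_of_length_lt (by rw [List.length_drop]; omega)) _ _
  · subst hix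
    rw [List.drop_left, List.take_left]
    show List.Lex (· < ·) (c :: (t ++ [M])) (M :: (c :: t))
    exact List.Lex.rel hM

lemma listPow_succ' (x : List α) (k : ℕ) : listPow x (k + 1) = x ++ listPow x k := by
  simp [listPow, List.replicate_succ]

lemma listPow_length' (x : List α) (k : ℕ) : (listPow x k).length = k * x.length := by
  induction k with
  | zero => simp [listPow]
  | succ n ih => rw [listPow_succ', List.length_append, ih]; ring

lemma lyndon_pow_append {x y : List α} (hx : IsLyndon x) (hy : IsLyndon y)
    (hp : x <+: y) (hne : x ≠ y) : ∀ k, IsLyndon (listPow x k ++ y)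
  | 0 => by simpa [listPow] using hy
  | (k + 1) => by
    rw [listPow_succ', List.append_assoc]
    have hxy : x.length < y.length :=
      lt_of_le_of_ne hp.length_le (fun h => hne (hp.eq_of_length h))
    apply lyndon_append_s7 hx (lyndon_pow_append hx hy hp hne k)
    apply lt_of_prefix_ne
    · cases k with
      | zero => simpa [listPow] using hp
      | succ m => rw [listPow_succ', List.append_assoc]; exact List.prefix_append _ _
    · intro heq
      have := congrArg List.length heq
      rw [List.length_append, listPow_length'] at this
      omega

end Aux
set_option linter.unusedSectionVars false

/-- For `w = (uav')^k u` with `uav'` a Lyndon word and `k ≥ 1`: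
`wa ∈ P' \\ L`, i.e. `wa` is in `P'` but is not a Lyndon word. -/
theorem ext_equal_P'_not_lyndon [LinearOrder α] (u v' : List α) (a : α) (k : ℕ)
    (hk : 1 ≤ k) (hL : IsLyndon (u ++ a :: v')) :
    InP' (listPow (u ++ a :: v') k ++ u ++ [a]) ∧
      ¬ IsLyndon (listPow (u ++ a :: v') k ++ u ++ [a]) := by
  have hlne : u ++ a :: v' ≠ [] := by simp
  have hsplit : u ++ a :: v' = (u ++ [a]) ++ v' := by simp
  have hnot : ¬ IsLyndon (listPow (u ++ a :: v') k ++ u ++ [a]) := by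
    apply border_not_lyndon (b := u ++ [a]) (by simp)
    refine ⟨?_, ?_, ?_⟩
    · obtain ⟨k', rfl⟩ : ∃ k', k = k' + 1 := ⟨k - 1, by omega⟩
      rw [listPow_succ', hsplit]
      exact ⟨v' ++ listPow ((u ++ [a]) ++ v') k' ++ (u ++ [a]), by simp⟩
    · rw [List.append_assoc]; exact List.suffix_append _ _
    · rw [List.append_assoc]
      have h3 : (listPow (u ++ a :: v') k ++ (u ++ [a])).length
          = (listPow (u ++ a :: v') k).length + (u ++ [a]).length :=
        List.length_append
      rw [h3, listPow_length']
      have h2 : 0 < k * (u ++ a :: v').length := Nat.mul_pos (by omega) (by simp)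
      omega
  refine ⟨?_, hnot⟩
  obtain ⟨c, t, hct⟩ : ∃ c t, u ++ a :: v' = c :: t := by
    cases h' : u ++ a :: v' with
    | nil => exact absurd h' hlne
    | cons c t => exact ⟨c, t, rfl⟩
  by_cases hM : ∃ M, c < M
  · obtain ⟨M, hM⟩ := hM
    left
    refine ⟨by simp, ⟨v' ++ [M], ?_⟩⟩
    have heq : listPow (u ++ a :: v') k ++ u ++ [a] ++ (v' ++ [M])
        = listPow (u ++ a :: v') k ++ ((u ++ a :: v') ++ [M]) := by
      simp
    rw [heq]
    have hy : IsLyndon ((u ++ a :: v') ++ [M]) := by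
      rw [hct]; exact lyndon_append_singleton (hct ▸ hL) hM
    exact lyndon_pow_append hL hy (List.prefix_append _ _)
      (fun h => by have := congrArg List.length h; simp at this) k
  · push_neg at hM
    have hlen1 : (u ++ a :: v').length = 1 := by
      by_contra hc
      have hpos : 0 < (u ++ a :: v').length := by simp
      have h2 : 2 ≤ (u ++ a :: v').length := by omega
      have hdrop := lyndon_lt_drop_s7 hL (i := (u ++ a :: v').length - 1)
        (by omega) (by omega)
      obtain ⟨z, hz⟩ := List.length_eq_one_iff.mp
        (show ((u ++ a :: v').drop ((u ++ a :: v').length - 1)).length = 1 by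
          rw [List.length_drop]; omega)
      rw [hz] at hdrop
      have hzc : z ≤ c := hM z
      rw [hct] at hdrop
      have hdrop' : List.Lex (· < ·) (c :: t) [z] := hdrop
      cases hdrop' with
      | rel hr => exact absurd hr (not_lt.mpr hzc)
      | cons ht => exact List.not_lex_nil ht
    have hu : u = [] := by
      apply List.length_eq_zero_iff.mp
      have := hlen1; simp at this; omega
    have hv : v' = [] := by
      apply List.length_eq_zero_iff.mp
      have := hlen1; simp at this; omega
    subst hu; subst hv
    have hac : c = a := by
      have h := hct.symm
      simp at h
      exact h.1
    rw [hac] at hM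
    right
    refine ⟨a, k + 1, by omega, fun x => hM x, ?_⟩
    have hsing : ∀ n, listPow [a] n = List.replicate n a := by
      intro n
      induction n with
      | zero => simp [listPow]
      | succ m ih => rw [listPow_succ', ih, List.replicate_succ]; rfl
    simp [hsing, List.replicate_succ']
end

section
/- Let w be a nonempty word with Lyndon factorization CFL(w) = w₁, w₂, …, w_m. Then |w₁| = min { j > 0 : suf(w,j) < w } (with the convention that the empty suffix suf(w,|w|) satisfies suf(w,|w|) < w), and w₁ = w₂ = ⋯ = w_k = w[0..|w₁|-1], where k = 1 + ⌊ lcp(w, suf(w,|w₁|)) / |w₁| ⌋. -/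
variable {α : Type*}

set_option linter.unusedSectionVars false
set_option linter.unusedVariables false

section Helpers
variable [LinearOrder α]

lemma myNilLt {v : List α} (hv : v ≠ []) : ([] : List α) < v := by
  cases v with
  | nil => exact absurd rfl hv
  | cons a l => exact List.nil_lt_cons a l

lemma myLexAppend {r : α → α → Prop} :
    ∀ {u v : List α}, List.Lex r u v → ¬ u <+: v → ∀ (s t : List α),
      List.Lex r (u ++ s) (v ++ t)
  | _, _, List.Lex.nil, hp, _, _ => absurd (List.nil_prefix) hp
  | _, _, @List.Lex.cons _ _ a u v h, hp, s, t =>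
      List.Lex.cons (myLexAppend h (fun hpre => hp (List.cons_prefix_cons.mpr ⟨rfl, hpre⟩)) s t)
  | _, _, List.Lex.rel h, _, _, _ => List.Lex.rel h

lemma myLtAppend {u v : List α} (h : u < v) (hp : ¬ u <+: v) (s t : List α) :
    u ++ s < v ++ t :=
  myLexAppend h hp s t

lemma myAppendLtIff (u : List α) {a b : List α} : u ++ a < u ++ b ↔ a < b := by
  induction u with
  | nil => rfl
  | cons x u ih =>
      constructor
      · intro h
        exact ih.mp (List.lex_cons_iff.mp h)
      · intro h
        exact List.Lex.cons (ih.mpr h)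

lemma myPrefixLe {u v : List α} (h : u <+: v) : u ≤ v := by
  obtain ⟨t, rfl⟩ := h
  rcases eq_or_ne t [] with rfl | ht
  · simp
  · refine le_of_lt ?_
    have : u ++ [] < u ++ t := (myAppendLtIff u).mpr (myNilLt ht)
    simpa using this

/-- A proper nonempty suffix of a Lyndon word is greater than the word. -/
lemma lyndon_lt_drop_s9 {v : List α} (hv : IsLyndon v) {j : ℕ} (hj : 0 < j)
    (hjl : j < v.length) : v < v.drop j := by
  rcases lt_trichotomy v (v.drop j) with h | h | h
  · exact h
  · exfalso
    have := congrArg List.length h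
    simp [List.length_drop] at this
    omega
  · exfalso
    by_cases hp : v.drop j <+: v
    · -- bordered case
      have hlen : (v.drop j).length = v.length - j := List.length_drop ..
      have htake : v.drop j = v.take (v.length - j) := by
        have := List.prefix_iff_eq_take.mp hp
        rw [this, hlen]
      set i := v.length - j with hi
      have hi0 : 0 < i := by omega
      have hil : i < v.length := by omega
      have h1 : v < rot v i := hv.2 i hi0 hil
      have h2 : v < rot v j := hv.2 j hj hjl
      -- v = v.take i ++ v.drop i = v.drop j ++ v.drop i
      have hsplit : v = v.drop j ++ v.drop i := by
        conv_lhs => rw [← List.take_append_drop i v]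
        rw [← htake]
      -- from h2 : v < v.drop j ++ v.take j, cancel
      have h2' : v.drop i < v.take j := by
        have : v.drop j ++ v.drop i < v.drop j ++ v.take j := by
          rw [← hsplit]; exact h2
        exact (myAppendLtIff _).mp this
      have hlen2 : (v.drop i).length = (v.take j).length := by
        simp [List.length_drop, List.length_take]; omega
      have hnp : ¬ v.drop i <+: v.take j := by
        intro hpre
        exact absurd (List.IsPrefix.eq_of_length hpre hlen2) (ne_of_lt h2')
      have : v.drop i ++ v.take i < v.take j ++ v.drop j :=
        myLtAppend h2' hnp _ _
      rw [List.take_append_drop] at this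
      exact absurd this (lt_asymm h1)
    · have hne : v.drop j ≠ v := by
        intro he
        have := congrArg List.length he
        simp [List.length_drop] at this; omega
      have hlt : v.drop j < v := h
      have : v.drop j ++ v.take j < v ++ [] := myLtAppend hlt hp _ _
      rw [List.append_nil] at this
      exact absurd (hv.2 j hj hjl) (lt_asymm this)

/-- Claim C: the flatten of a CFL-style factorization is < any Lyndon word
strictly greater than the head. -/
lemma flatten_lt_lyndon :
    ∀ (g : List (List α)), (∀ x ∈ g, IsLyndon x) → g.Chain' (· ≥ ·) →
      ∀ v : List α, IsLyndon v → (∀ u, g.head? = some u → u < v) →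
        g.flatten < v := by
  intro g
  induction g with
  | nil => intro _ _ v hv _; simpa using myNilLt hv.1
  | cons u g' ih =>
      intro hL hc v hv hd
      have hu : u < v := hd u rfl
      have hL' : ∀ x ∈ g', IsLyndon x := fun x hx => hL x (List.mem_cons_of_mem _ hx)
      have hc' : g'.Chain' (· ≥ ·) := hc.tail
      by_cases hp : u <+: v
      · -- v = u ++ v₁, v₁ nonempty
        have hul : u.length < v.length := by
          rcases lt_or_eq_of_le hp.length_le with h | h
          · exact h
          · exact absurd (List.IsPrefix.eq_of_length hp h) (ne_of_lt hu)
        have hv1 : v = u ++ v.drop u.length := by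
          conv_lhs => rw [← List.take_append_drop u.length v]
          rw [← List.prefix_iff_eq_take.mp hp]
        have hu0 : 0 < u.length := List.length_pos_iff.mpr (hL u (List.mem_cons_self)).1
        have hvlt : v < v.drop u.length := lyndon_lt_drop_s9 hv hu0 hul
        have htlt : g'.flatten < v := by
          apply ih hL' hc' v hv
          intro u' hu'
          have : u' ≤ u := by
            cases g' with
            | nil => simp at hu'
            | cons a g'' =>
                simp at hu'
                subst hu'
                exact (List.isChain_cons_cons.mp hc).1
          exact lt_of_le_of_lt this hu
        have : g'.flatten < v.drop u.length := lt_trans htlt hvlt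
        calc (u :: g').flatten = u ++ g'.flatten := by simp
          _ < u ++ v.drop u.length := (myAppendLtIff u).mpr this
          _ = v := hv1.symm
      · have : u ++ g'.flatten < v ++ [] := myLtAppend hu hp _ _
        simpa using this

/-- Claim G: flatten < v ++ flatten when head ≤ v, v Lyndon. -/
lemma flatten_lt_cons :
    ∀ (g : List (List α)), (∀ x ∈ g, IsLyndon x) → g.Chain' (· ≥ ·) →
      ∀ v : List α, IsLyndon v → (∀ u, g.head? = some u → u ≤ v) →
        g.flatten < v ++ g.flatten := by
  intro g
  induction g with
  | nil => intro _ _ v hv _; simpa using myNilLt hv.1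
  | cons u g' ih =>
      intro hL hc v hv hd
      have hu : u ≤ v := hd u rfl
      have hL' : ∀ x ∈ g', IsLyndon x := fun x hx => hL x (List.mem_cons_of_mem _ hx)
      have hc' : g'.Chain' (· ≥ ·) := hc.tail
      rcases lt_or_eq_of_le hu with hu | rfl
      · have h1 : (u :: g').flatten < v :=
          flatten_lt_lyndon (u :: g') hL hc v hv
            (fun u' hu' => by simp at hu'; subst hu'; exact hu)
        exact lt_of_lt_of_le h1 (myPrefixLe ⟨(u :: g').flatten, rfl⟩)
      · have h1 : g'.flatten < u ++ g'.flatten := by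
          apply ih hL' hc' u (hL u (List.mem_cons_self))
          intro u' hu'
          cases g' with
          | nil => simp at hu'
          | cons a g'' =>
              simp at hu'
              subst hu'
              exact (List.isChain_cons_cons.mp hc).1
        calc (u :: g').flatten = u ++ g'.flatten := by simp
          _ < u ++ (u ++ g'.flatten) := (myAppendLtIff u).mpr h1
          _ = u ++ (u :: g').flatten := by simp

end Helpers

section LcpHelpers
variable [DecidableEq α]

lemma lcpLen_nil_right : ∀ u : List α, lcpLen u [] = 0
  | [] => rfl
  | _ :: _ => rfl

lemma lcpLen_le_right : ∀ u v : List α, lcpLen u v ≤ v.length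
  | a :: u, b :: v => by
      by_cases h : a = b <;> simp [lcpLen, h]
      exact lcpLen_le_right u v
  | [], _ => by simp [lcpLen]
  | _ :: _, [] => by simp [lcpLen]

lemma lcpLen_append : ∀ (x u v : List α), lcpLen (x ++ u) (x ++ v) = x.length + lcpLen u v
  | [], u, v => by simp
  | a :: x, u, v => by
      simp [lcpLen, lcpLen_append x u v]
      omega

lemma take_eq_take_of_le_lcpLen :
    ∀ (u v : List α) (n : ℕ), n ≤ lcpLen u v → u.take n = v.take n
  | _, _, 0, _ => by simp
  | a :: u, b :: v, n + 1, h => by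
      by_cases hab : a = b
      · subst hab
        simp [lcpLen] at h
        simp [take_eq_take_of_le_lcpLen u v n (by omega)]
      · simp [lcpLen, hab] at h
  | [], v, n + 1, h => by simp [lcpLen] at h
  | a :: u, [], n + 1, h => by simp [lcpLen] at h

end LcpHelpers

section Main
variable [LinearOrder α]

lemma claim2 :
    ∀ (f' : List (List α)) (w₁ : List α), IsLyndon w₁ →
      (∀ x ∈ f', IsLyndon x) → (w₁ :: f').Chain' (· ≥ ·) →
      (w₁ :: f').take (1 + lcpLen (w₁ ++ f'.flatten) f'.flatten / w₁.length) =
        List.replicate (1 + lcpLen (w₁ ++ f'.flatten) f'.flatten / w₁.length) w₁ := by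
  intro f'
  induction f' with
  | nil =>
      intro w₁ _ _ _
      simp [lcpLen_nil_right]
  | cons u f'' ih =>
      intro w₁ hw₁ hL hc
      have hn : 0 < w₁.length := List.length_pos_iff.mpr hw₁.1
      have hu : u ≤ w₁ := (List.isChain_cons_cons.mp hc).1
      have hLu : IsLyndon u := hL u (List.mem_cons_self)
      have hL'' : ∀ x ∈ f'', IsLyndon x := fun x hx => hL x (List.mem_cons_of_mem _ hx)
      rcases lt_or_eq_of_le hu with hu | rfl
      · -- u < w₁ : lcp < n, k = 1
        have hlt : (u :: f'').flatten < w₁ :=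
          flatten_lt_lyndon (u :: f'') hL (List.IsChain.tail hc) w₁ hw₁
            (fun u' hu' => by simp at hu'; subst hu'; exact hu)
        have hplt : lcpLen (w₁ ++ (u :: f'').flatten) (u :: f'').flatten < w₁.length := by
          by_contra hge
          push_neg at hge
          set t := (u :: f'').flatten
          have hle : w₁.length ≤ t.length :=
            le_trans hge (lcpLen_le_right _ _)
          have heq : (w₁ ++ t).take w₁.length = t.take w₁.length :=
            take_eq_take_of_le_lcpLen _ _ _ hge
          rw [List.take_left] at heq
          have hpre : w₁ <+: t := heq ▸ (List.take_prefix w₁.length t)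
          exact absurd hlt (not_lt_of_ge (myPrefixLe hpre))
        rw [Nat.div_eq_of_lt hplt]
        simp
      · -- u = w₁ (after subst, everything is in terms of u)
        have heq : lcpLen (u ++ (u :: f'').flatten) (u :: f'').flatten
            = u.length + lcpLen (u ++ f''.flatten) f''.flatten := by
          have h1 : (u :: f'').flatten = u ++ f''.flatten := by simp
          rw [h1, lcpLen_append]
        rw [heq]
        have hdiv : (u.length + lcpLen (u ++ f''.flatten) f''.flatten) / u.length
            = lcpLen (u ++ f''.flatten) f''.flatten / u.length + 1 := by
          rw [Nat.add_comm, Nat.add_div_right _ hn]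
        rw [hdiv]
        have ihh := ih u hLu hL'' (List.IsChain.tail hc)
        have hre : 1 + (lcpLen (u ++ f''.flatten) f''.flatten / u.length + 1)
            = (1 + lcpLen (u ++ f''.flatten) f''.flatten / u.length) + 1 := by omega
        rw [hre, List.take_succ_cons, List.replicate_succ, ihh]

end Main


/-- For `CFL(w) = w₁, …, w_m`: `|w₁| = min { j > 0 : suf(w,j) < w }` and
`w₁ = ⋯ = w_k = w[0..|w₁|-1]` where `k = 1 + ⌊lcp(w, suf(w,|w₁|)) / |w₁|⌋`. -/
theorem cfl_first_factor [LinearOrder α] (w : List α) (hw : w ≠ [])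
    (w₁ : List α) (f' : List (List α)) (hf : IsCFL w (w₁ :: f')) :
    w₁.length = sInf {j : ℕ | 0 < j ∧ w.drop j < w} ∧
      (w₁ :: f').take (1 + lcpLen w (w.drop w₁.length) / w₁.length) =
        List.replicate (1 + lcpLen w (w.drop w₁.length) / w₁.length)
          (w.take w₁.length) := by
  obtain ⟨hflat, hL, hc⟩ := hf
  have hw₁ : IsLyndon w₁ := hL w₁ (List.mem_cons_self)
  have hL' : ∀ x ∈ f', IsLyndon x := fun x hx => hL x (List.mem_cons_of_mem _ hx)
  have hw' : w = w₁ ++ f'.flatten := by simpa using hflat.symm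
  have hn : 0 < w₁.length := List.length_pos_iff.mpr hw₁.1
  have hdropn : w.drop w₁.length = f'.flatten := by rw [hw']; exact List.drop_left
  have htaken : w.take w₁.length = w₁ := by rw [hw']; exact List.take_left
  have hd : f'.flatten < w := by
    rw [hw']
    apply flatten_lt_cons f' hL' hc.tail w₁ hw₁
    intro u hu
    cases f' with
    | nil => simp at hu
    | cons a g =>
        simp at hu; subst hu
        exact (List.isChain_cons_cons.mp hc).1
  have hmem : w₁.length ∈ {j : ℕ | 0 < j ∧ w.drop j < w} := ⟨hn, by rw [hdropn]; exact hd⟩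
  constructor
  · refine le_antisymm (le_csInf ⟨_, hmem⟩ ?_) (Nat.sInf_le hmem)
    intro m hm
    obtain ⟨hm0, hmlt⟩ := hm
    by_contra hcon
    push_neg at hcon
    have h1 : w₁ < w₁.drop m := lyndon_lt_drop_s9 hw₁ hm0 hcon
    have hnp : ¬ w₁ <+: w₁.drop m := by
      intro hpre
      have := hpre.length_le
      simp at this
      omega
    have h2 : w₁ ++ f'.flatten < w₁.drop m ++ f'.flatten := myLtAppend h1 hnp _ _
    have h3 : w < w.drop m := by
      rw [hw', List.drop_append_of_le_length (le_of_lt hcon)]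
      exact h2
    exact absurd hmlt (lt_asymm h3)
  · rw [htaken, hdropn]
    conv_lhs => rw [hw']
    conv_rhs => rw [hw']
    exact claim2 f' w₁ hw₁ hL' hc
end

section
/- Let w be a nonempty word over Σ with Lyndon factorization w₁, w₂, …, w_m and run-length encoding of length ρ. Then for any 1 ≤ i ≤ ρ, either there exists a factor w_j such that the interval [a_i^{rle}, b_i^{rle}] is contained in [a_j, b_j], or there exist l_i consecutive factors w_j, w_{j+1}, …, w_{j+l_i-1} such that |w_{j+t}| = 1 and a_{j+t} ∈ [a_i^{rle}, b_i^{rle}] for all 0 ≤ t < l_i. -/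
variable {α : Type*}

/-- Starting position `a_j` (0-indexed `j`) of the `j`-th factor of a factorization `f`. -/
def factStart (f : List (List α)) (j : ℕ) : ℕ := ((f.take j).map List.length).sum

/-- Starting position `a_i^{rle}` (0-indexed `i`) of the `i`-th run of an RLE sequence `R`. -/
def rleStart (R : List (α × ℕ)) (i : ℕ) : ℕ := ((R.take i).map Prod.snd).sum

/-- The word encoded by an RLE sequence. -/
def rleWord (R : List (α × ℕ)) : List α :=
  (R.map (fun p => List.replicate p.2 p.1)).flatten

section Aux

variable {α : Type*} [LinearOrder α]

/- ### Lexicographic order helpers -/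

theorem lex_of_lt' {x y : List α} (h : x < y) : List.Lex (· < ·) x y := h
theorem lt_of_lex' {x y : List α} (h : List.Lex (· < ·) x y) : x < y := h

theorem le_of_cons_lt' {a b : α} {x y : List α} (h : (a :: x : List α) < b :: y) : a ≤ b := by
  cases lex_of_lt' h with
  | cons h => exact le_refl _
  | rel h => exact le_of_lt h

theorem cons_lt_cons_of_lt' {a b : α} (h : a < b) (x y : List α) :
    (a :: x : List α) < b :: y := lt_of_lex' (List.Lex.rel h)

theorem lt_of_append_lt' {x y : List α} (l : List α) (h : l ++ x < l ++ y) : x < y := by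
  induction l with
  | nil => exact h
  | cons c l ih =>
    cases lex_of_lt' h with
    | cons h => exact ih (lt_of_lex' h)
    | rel h => exact absurd h (lt_irrefl c)

theorem getElem_zero_le_of_lt' {x y : List α} (hx : x ≠ []) (hy : y ≠ [])
    (h : x < y) : x[0]'(List.length_pos_iff.mpr hx) ≤ y[0]'(List.length_pos_iff.mpr hy) := by
  obtain ⟨a, x, rfl⟩ := List.exists_cons_of_ne_nil hx
  obtain ⟨b, y, rfl⟩ := List.exists_cons_of_ne_nil hy
  simpa using le_of_cons_lt' h

theorem singleton_getElem_zero_lt' {u : List α} (h2 : 2 ≤ u.length) :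
    [u[0]'(by omega)] < u := by
  match u, h2 with
  | a :: b :: t, _ =>
    exact lt_of_lex' (List.Lex.cons List.Lex.nil)

/- ### Lyndon word facts -/

theorem lyndon_getElem_zero_le {u : List α} (hu : IsLyndon u) (k : ℕ) (hk : k < u.length) :
    u[0]'(List.length_pos_iff.mpr hu.1) ≤ u[k] := by
  rcases Nat.eq_zero_or_pos k with rfl | hk0
  · exact le_refl _
  have hlt := hu.2 k hk0 hk
  have hdrop : u.drop k ≠ [] := by
    simp only [ne_eq, List.drop_eq_nil_iff]; omega
  have hy : (u.drop k ++ u.take k) ≠ [] := by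
    simp only [ne_eq, List.append_eq_nil_iff]; intro h; exact hdrop h.1
  have h0 := getElem_zero_le_of_lt' hu.1 hy hlt
  have hidx : (u.drop k ++ u.take k)[0]'(List.length_pos_iff.mpr hy) = u[k] := by
    rw [List.getElem_append_left (by simp; omega)]
    simp [List.getElem_drop]
  rwa [hidx] at h0

theorem lyndon_head_lt_getLast {u : List α} (hu : IsLyndon u) (h2 : 2 ≤ u.length) :
    u[0]'(by omega) < u[u.length - 1]'(by omega) := by
  set c := u[0]'(by omega : 0 < u.length) with hc
  have hne := hu.1
  have hle : c ≤ u[u.length - 1]'(by omega) := lyndon_getElem_zero_le hu _ (by omega)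
  rcases lt_or_eq_of_le hle with h | hlast
  · exact h
  exfalso
  -- hlast : c = u[len-1]
  set p : α → Bool := fun x => decide (x = c) with hp
  set s := u.takeWhile p with hs
  set r := u.dropWhile p with hr
  have hu_eq : s ++ r = u := List.takeWhile_append_dropWhile
  have hs_rep : s = List.replicate s.length c :=
    List.eq_replicate_of_mem (fun b hb => by
      have := List.mem_takeWhile_imp hb; simpa [hp] using this)
  by_cases hr0 : r = []
  · -- u is a power of c, contradicts Lyndon with rotation 1
    have hus : u = s := by rw [← hu_eq, hr0, List.append_nil]
    have hu_rep : u = List.replicate u.length c := by rw [hus]; exact hs_rep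
    have hrot := hu.2 1 one_pos (by omega)
    rw [rot] at hrot
    rw [hu_rep, List.drop_replicate, List.take_replicate, ← List.replicate_add] at hrot
    have hn : u.length - 1 + min 1 u.length = u.length := by omega
    rw [hn] at hrot
    exact lt_irrefl _ hrot
  · have hulen : u.length = s.length + r.length := by
      rw [← hu_eq, List.length_append]
    have hrlen : 0 < r.length := List.length_pos_iff.mpr hr0
    obtain ⟨d, rt, hrd⟩ := List.exists_cons_of_ne_nil hr0
    have hd_ne : d ≠ c := by
      have hh := List.head_dropWhile_not p (l := u) (by rw [← hr]; exact hr0)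
      simp only [← hr] at hh
      simp only [hrd, List.head_cons, hp] at hh
      simpa using hh
    have hd_idx? : u[s.length]? = some d := by
      rw [← hu_eq, List.getElem?_append_right (le_refl s.length)]
      simp [hrd]
    have hd_idx : u[s.length]'(by omega) = d := by
      have := hd_idx?
      rw [List.getElem?_eq_getElem (by omega)] at this
      exact Option.some.inj this
    have hd_gt : c < d := by
      have h1 := lyndon_getElem_zero_le hu s.length (by omega)
      rw [hd_idx] at h1
      exact lt_of_le_of_ne h1 (Ne.symm hd_ne)
    -- last letter of r is c
    have hrlast? : r[r.length - 1]? = some c := by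
      have h1 : u[u.length - 1]? = some c := by
        rw [List.getElem?_eq_getElem (by omega), ← hlast]
      rw [← hu_eq] at h1
      rw [List.getElem?_append_right (by simp only [List.length_append]; omega)] at h1
      have hidx : (s ++ r).length - 1 - s.length = r.length - 1 := by
        simp only [List.length_append]; omega
      rwa [hidx] at h1
    have hr2 : 2 ≤ r.length := by
      by_contra hcon
      have h1 : r.length = 1 := by omega
      rw [h1] at hrlast?
      simp only [hrd] at hrlast?
      simp at hrlast?
      exact hd_ne hrlast?
    -- rotation at length - 1
    have hrot := hu.2 (u.length - 1) (by omega) (by omega)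
    rw [rot] at hrot
    have hdrop_eq : u.drop (u.length - 1) = [c] := by
      rw [List.drop_eq_getElem_cons (by omega)]
      rw [List.drop_eq_nil_of_le (by omega)]
      rw [← hlast]
    have htake_eq : u.take (u.length - 1) = u.dropLast := List.dropLast_eq_take.symm
    rw [hdrop_eq, htake_eq] at hrot
    have hdl : u.dropLast = s ++ r.dropLast := by
      rw [← hu_eq, List.dropLast_append_of_ne_nil hr0]
    rw [hdl] at hrot
    have hrw : ([c] ++ (s ++ r.dropLast) : List α) = s ++ (c :: r.dropLast) := by
      rw [hs_rep]
      calc ([c] ++ (List.replicate s.length c ++ r.dropLast) : List α)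
          = List.replicate (s.length + 1) c ++ r.dropLast := by
            simp [List.replicate_succ]
        _ = (List.replicate s.length c ++ [c]) ++ r.dropLast := by
            rw [List.replicate_succ']
        _ = List.replicate s.length c ++ (c :: r.dropLast) := by simp
    rw [hrw] at hrot
    conv at hrot => lhs; rw [← hu_eq]
    have hlt_r : r < c :: r.dropLast := lt_of_append_lt' s hrot
    rw [hrd] at hlt_r
    exact absurd (le_of_cons_lt' hlt_r) (not_le.mpr hd_gt)

end Aux

section FactStart

variable {α : Type*}

theorem factStart_zero (f : List (List α)) : factStart f 0 = 0 := by simp [factStart]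

theorem factStart_cons_succ (u : List α) (f : List (List α)) (j : ℕ) :
    factStart (u :: f) (j + 1) = u.length + factStart f j := by
  simp [factStart, List.take_succ_cons]

theorem factStart_succ (f : List (List α)) (j : ℕ) (hj : j < f.length) :
    factStart f (j + 1) = factStart f j + (f.get ⟨j, hj⟩).length := by
  unfold factStart
  rw [List.take_succ, List.getElem?_eq_getElem hj, Option.toList_some,
    List.map_append, List.sum_append]
  simp [List.get_eq_getElem]

theorem factStart_of_le (f : List (List α)) (j : ℕ) (hj : f.length ≤ j) :
    factStart f j = f.flatten.length := by
  rw [factStart, List.take_of_length_le hj, List.length_flatten]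

theorem factStart_mono (f : List (List α)) : Monotone (factStart f) := by
  apply monotone_nat_of_le_succ
  intro j
  rcases Nat.lt_or_ge j f.length with h | h
  · rw [factStart_succ f j h]; omega
  · rw [factStart_of_le f j h, factStart_of_le f (j + 1) (by omega)]

theorem lt_length_of_factStart_lt (f : List (List α)) (j : ℕ)
    (h : factStart f j < f.flatten.length) : j < f.length := by
  by_contra hc
  rw [factStart_of_le f j (by omega)] at h
  omega

theorem flatten_getElem?_eq (f : List (List α)) (j : ℕ) (hj : j < f.length) (r : ℕ)
    (hr : r < (f.get ⟨j, hj⟩).length) :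
    f.flatten[factStart f j + r]? = (f.get ⟨j, hj⟩)[r]? := by
  induction f generalizing j with
  | nil => simp at hj
  | cons u f ih =>
    cases j with
    | zero =>
      rw [factStart_zero, Nat.zero_add]
      simp only [List.flatten_cons, List.get_eq_getElem, List.getElem_cons_zero]
      simp only [List.get_eq_getElem, List.getElem_cons_zero] at hr
      rw [List.getElem?_append]
      simp [hr]
    | succ j =>
      rw [factStart_cons_succ]
      simp only [List.flatten_cons]
      rw [Nat.add_assoc, List.getElem?_append_right (by omega)]
      rw [Nat.add_sub_cancel_left]
      exact ih j (by simpa using hj) (by simpa using hr)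

theorem flatten_cover (f : List (List α)) (p : ℕ) (hp : p < f.flatten.length) :
    ∃ j, ∃ hj : j < f.length,
      factStart f j ≤ p ∧ p < factStart f j + (f.get ⟨j, hj⟩).length := by
  induction f generalizing p with
  | nil => simp at hp
  | cons u f ih =>
    rcases Nat.lt_or_ge p u.length with h | h
    · exact ⟨0, by simp, by simp [factStart_zero], by simpa [factStart_zero] using h⟩
    · have hp' : p - u.length < f.flatten.length := by
        simp only [List.flatten_cons, List.length_append] at hp; omega
      obtain ⟨j, hj, h1, h2⟩ := ih _ hp'
      refine ⟨j + 1, by simpa using Nat.succ_lt_succ hj, ?_, ?_⟩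
      · rw [factStart_cons_succ]; omega
      · rw [factStart_cons_succ]
        simp only [List.get_cons_succ]
        omega

end FactStart

/-- Each run of the RLE is either contained in one Lyndon factor, or corresponds
to `l_i` consecutive unit-length factors starting inside it. -/
theorem rle_run_contained_or_units [LinearOrder α] (w : List α) (hw : w ≠ [])
    (f : List (List α)) (hf : IsCFL w f)
    (R : List (α × ℕ)) (hR1 : ∀ p ∈ R, 1 ≤ p.2)
    (hR2 : R.Chain' (fun p q => p.1 ≠ q.1)) (hRw : rleWord R = w)
    (i : ℕ) (hi : i < R.length) :
    (∃ j : ℕ, ∃ hj : j < f.length,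
        factStart f j ≤ rleStart R i ∧
        rleStart R i + (R.get ⟨i, hi⟩).2 - 1 ≤ factStart f j + (f.get ⟨j, hj⟩).length - 1) ∨
    (∃ j : ℕ, ∀ t : ℕ, t < (R.get ⟨i, hi⟩).2 → ∃ hjt : j + t < f.length,
        (f.get ⟨j + t, hjt⟩).length = 1 ∧
        rleStart R i ≤ factStart f (j + t) ∧
        factStart f (j + t) ≤ rleStart R i + (R.get ⟨i, hi⟩).2 - 1) := by
  classical
  obtain ⟨hflat, hlyn, hchain⟩ := hf
  set c := (R.get ⟨i, hi⟩).1 with hc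
  set l := (R.get ⟨i, hi⟩).2 with hldef
  set A := rleStart R i with hA
  have hl1 : 1 ≤ l := hR1 _ (List.get_mem R _)
  -- view the RLE as a flatten
  set F : List (List α) := R.map (fun p => List.replicate p.2 p.1) with hF
  have hFw : F.flatten = w := hRw
  have hFlen : F.length = R.length := by simp [hF]
  have hiF : i < F.length := by omega
  have hFget : F.get ⟨i, hiF⟩ = List.replicate l c := by
    simp [hF, hldef, hc, List.getElem_map]
  have hAF : factStart F i = A := by
    rw [hA]
    simp [factStart, rleStart, hF, ← List.map_take, List.map_map, Function.comp_def]
  have hrun : ∀ t, t < l → w[A + t]? = some c := by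
    intro t ht
    have h1 := flatten_getElem?_eq F i hiF t (by rw [hFget]; simpa using ht)
    rw [hFw, hAF, hFget] at h1
    rw [h1, List.getElem?_eq_getElem (by simpa using ht)]
    simp
  have hAl : A + l ≤ w.length := by
    have h1 : factStart F (i + 1) = A + l := by
      rw [factStart_succ F i hiF, hAF, hFget]; simp
    have h2 := factStart_mono F (show i + 1 ≤ F.length by omega)
    rw [h1, factStart_of_le F _ (le_refl _), hFw] at h2
    exact h2
  -- factor basics
  have hfne : ∀ (j : ℕ) (hj : j < f.length), (f.get ⟨j, hj⟩) ≠ [] :=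
    fun j hj => (hlyn _ (List.get_mem f _)).1
  have hfpos : ∀ (j : ℕ) (hj : j < f.length), 0 < (f.get ⟨j, hj⟩).length :=
    fun j hj => List.length_pos_iff.mpr (hfne j hj)
  have hletter : ∀ (j : ℕ) (hj : j < f.length) (r : ℕ),
      ∀ (hr : r < (f.get ⟨j, hj⟩).length),
      w[factStart f j + r]? = (f.get ⟨j, hj⟩)[r]? := by
    intro j hj r hr
    rw [← hflat]
    exact flatten_getElem?_eq f j hj r hr
  have hchain' : ∀ (j : ℕ) (hj : j + 1 < f.length),
      f.get ⟨j + 1, hj⟩ ≤ f.get ⟨j, by omega⟩ := by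
    intro j hj
    exact List.isChain_iff_getElem.mp hchain j (by omega)
  by_cases hS : ∃ j, j < f.length ∧ A < factStart f j ∧ factStart f j < A + l
  · -- there is a factor boundary strictly inside the run: unit factors
    right
    obtain ⟨hj₀, hAlt, hltAl⟩ := Nat.find_spec hS
    have hj₀pos : 0 < Nat.find hS := by
      by_contra hcon
      have h0 : Nat.find hS = 0 := by omega
      rw [h0, factStart_zero] at hAlt
      omega
    obtain ⟨k, hkj⟩ : ∃ k, Nat.find hS = k + 1 := ⟨Nat.find hS - 1, by omega⟩
    rw [hkj] at hj₀ hAlt hltAl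
    have hk_lt : k < f.length := by omega
    have hmink := Nat.find_min hS (show k < Nat.find hS by omega)
    have hfsj₀ : factStart f (k + 1) = factStart f k + (f.get ⟨k, hk_lt⟩).length :=
      factStart_succ f k hk_lt
    have hfsk_le : factStart f k ≤ A := by
      by_contra hcon
      push_neg at hcon
      exact hmink ⟨hk_lt, hcon, by have := hfpos k hk_lt; omega⟩
    -- the last letter of factor k is c
    have hlastk : (f.get ⟨k, hk_lt⟩)[(f.get ⟨k, hk_lt⟩).length - 1]? = some c := by
      have hpos := hfpos k hk_lt
      have h1 := hletter k hk_lt ((f.get ⟨k, hk_lt⟩).length - 1) (by omega)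
      have h2 : factStart f k + ((f.get ⟨k, hk_lt⟩).length - 1)
          = A + (factStart f (k + 1) - 1 - A) := by omega
      rw [h2, hrun _ (by omega)] at h1
      exact h1.symm
    -- the head of factor k+1 is c
    have hheadj₀ : (f.get ⟨k + 1, hj₀⟩)[0]? = some c := by
      have h1 := hletter (k + 1) hj₀ 0 (hfpos _ _)
      rw [Nat.add_zero] at h1
      have h2 : factStart f (k + 1) = A + (factStart f (k + 1) - A) := by omega
      rw [h2, hrun _ (by omega)] at h1
      exact h1.symm
    -- factor k is the single letter c
    have hk_sing : f.get ⟨k, hk_lt⟩ = [c] := by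
      have hlynk := hlyn _ (List.get_mem f ⟨k, hk_lt⟩)
      rcases Nat.lt_or_ge (f.get ⟨k, hk_lt⟩).length 2 with hlen | hlen
      · have h1 : (f.get ⟨k, hk_lt⟩).length = 1 := by have := hfpos k hk_lt; omega
        obtain ⟨a, ha⟩ := List.length_eq_one_iff.mp h1
        rw [ha] at hlastk ⊢
        simp only [List.length_cons, List.length_nil] at hlastk
        simp at hlastk
        rw [hlastk]
      · exfalso
        have hle := hchain' k hj₀
        obtain ⟨b, y, hby⟩ := List.exists_cons_of_ne_nil (hfne k hk_lt)
        obtain ⟨a, x, hax⟩ := List.exists_cons_of_ne_nil (hfne (k + 1) hj₀)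
        rw [hby] at hlynk hlastk hle hlen
        rw [hax] at hheadj₀ hle
        have ha : a = c := by simpa using hheadj₀
        have hhl := lyndon_head_lt_getLast hlynk hlen
        rw [List.getElem?_eq_getElem (by omega)] at hlastk
        have hlast_eq := Option.some.inj hlastk
        have hb_lt : b < c := by
          have h0 : (b :: y)[0]'(by simp) = b := rfl
          rw [h0, hlast_eq] at hhl
          exact hhl
        have hlt : (b :: y : List α) < a :: x := by
          rw [ha]
          exact cons_lt_cons_of_lt' hb_lt _ _
        exact absurd hlt (not_lt.mpr hle)
    have hfsk_eq : factStart f k = A := by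
      rw [hk_sing] at hfsj₀
      simp only [List.length_cons, List.length_nil] at hfsj₀
      omega
    -- forward induction: l unit factors
    have main : ∀ t, t < l → ∃ h : k + t < f.length,
        f.get ⟨k + t, h⟩ = [c] ∧ factStart f (k + t) = A + t := by
      intro t
      induction t with
      | zero => exact fun _ => ⟨hk_lt, hk_sing, hfsk_eq⟩
      | succ t ih =>
        intro ht
        obtain ⟨hh, hsing, hfs⟩ := ih (by omega)
        have hfs1 : factStart f (k + t + 1) = A + t + 1 := by
          rw [factStart_succ f (k + t) hh, hsing, hfs]
          simp
        have hlt_n : k + t + 1 < f.length := by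
          apply lt_length_of_factStart_lt
          rw [hflat, hfs1]
          omega
        have hhead : (f.get ⟨k + t + 1, hlt_n⟩)[0]? = some c := by
          have h1 := hletter (k + t + 1) hlt_n 0 (hfpos _ _)
          rw [Nat.add_zero, hfs1] at h1
          have h2 := hrun (t + 1) ht
          rw [show A + (t + 1) = A + t + 1 from rfl] at h2
          exact h1.symm.trans h2
        have hle := hchain' (k + t) hlt_n
        rw [hsing] at hle
        obtain ⟨a, x, hax⟩ := List.exists_cons_of_ne_nil (hfne (k + t + 1) hlt_n)
        rw [hax] at hle hhead
        have ha : a = c := by simpa using hhead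
        have hx : x = [] := by
          by_contra hxne
          have h2 : 2 ≤ (a :: x).length := by
            have := List.length_pos_iff.mpr hxne
            simp only [List.length_cons]
            omega
          have h3 := singleton_getElem_zero_lt' h2
          have h4 : ([c] : List α) < a :: x := by
            rw [← ha]
            simpa using h3
          exact absurd h4 (not_lt.mpr hle)
        refine ⟨hlt_n, ?_, ?_⟩
        · show f.get ⟨k + t + 1, hlt_n⟩ = [c]
          rw [hax, hx, ha]
        · show factStart f (k + t + 1) = A + (t + 1)
          omega
    refine ⟨k, fun t ht => ?_⟩
    obtain ⟨hh, hsing, hfs⟩ := main t ht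
    refine ⟨hh, by rw [hsing]; rfl, by omega, by omega⟩
  · -- no boundary inside the run: the run is contained in one factor
    left
    obtain ⟨j, hj, h1, h2⟩ := flatten_cover f A (by rw [hflat]; omega)
    refine ⟨j, hj, h1, ?_⟩
    have hkey : A + l ≤ factStart f j + (f.get ⟨j, hj⟩).length := by
      by_contra hcon
      push_neg at hcon
      have hfsj1 : factStart f (j + 1) = factStart f j + (f.get ⟨j, hj⟩).length :=
        factStart_succ f j hj
      rcases Nat.lt_or_ge (j + 1) f.length with h | h
      · exact hS ⟨j + 1, h, by omega, by omega⟩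
      · have h3 := factStart_of_le f (j + 1) h
        rw [hflat] at h3
        omega
    have := hfpos j hj
    omega
end
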